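/- Let n = k + l with k ≥ 2 and l ≥ 1, let α be a type, and let ξ = (ξ¹, …, ξ^{n−1}) be a map assigning to each z ∈ α a full flag of submodules of ℝⁿ satisfying the general position (hyperconvexity) condition. Fix distinct points x, y ∈ α and define, for 1 ≤ j ≤ k−1 and z ∈ α, the submodule τ_{yx}^j(z) of ξ^k(y) by: τ_{yx}^j(z) = (ξ^l(x) ⊔ ξ^j(z)) ⊓ ξ^k(y) if z ∉ {x, y}; τ_{yx}^j(x) = ξ^{l+j}(x) ⊓ ξ^k(y); and τ_{yx}^j(y) = ξ^j(y). Then for every p ≥ 2, every list of pairwise distinct points w₁, …, w_p ∈ α, and all positive integers n₁, …, n_p with each nᵢ ≤ k−1 and n₁ + ⋯ + n_p = k, the family of submodules (τ_{yx}^{nᵢ}(wᵢ))_{i=1,…,p} is independent and τ_{yx}^{n₁}(w₁) ⊔ ⋯ ⊔ τ_{yx}^{n_p}(w_p) = ξ^k(y). -/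

import Mathlib

open Module

private theorem finrank_finset_sup_le_sum {K V ι : Type*} [Field K] [AddCommGroup V] [Module K V]
    [FiniteDimensional K V] [DecidableEq ι] (f : ι → Submodule K V) (s : Finset ι) :
    finrank K ↥(s.sup f) ≤ ∑ i ∈ s, finrank K ↥(f i) := by
  induction s using Finset.induction_on with
  | empty => simp
  | @insert a s ha ih =>
    rw [Finset.sup_insert, Finset.sum_insert ha]
    have h := Submodule.finrank_sup_add_finrank_inf_eq (f a) (s.sup f)
    omega

private theorem finrank_finset_sup_eq_sum {K V ι : Type*} [Field K] [AddCommGroup V] [Module K V]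
    [FiniteDimensional K V] [DecidableEq ι] {f : ι → Submodule K V}
    (hf : iSupIndep f) (s : Finset ι) :
    finrank K ↥(s.sup f) = ∑ i ∈ s, finrank K ↥(f i) := by
  induction s using Finset.induction_on with
  | empty => simp
  | @insert a s ha ih =>
    rw [Finset.sup_insert, Finset.sum_insert ha]
    have hdisj : f a ⊓ s.sup f = ⊥ := by
      have hle : s.sup f ≤ ⨆ (j) (_ : j ≠ a), f j :=
        Finset.sup_le fun j hj => le_iSup₂ (f := fun j _ => f j) j (by rintro rfl; exact ha hj)
      exact disjoint_iff.mp ((hf a).mono_right hle)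
    have h := Submodule.finrank_sup_add_finrank_inf_eq (f a) (s.sup f)
    rw [hdisj, finrank_bot] at h
    omega

private theorem finrank_iSup_eq_sum {K V : Type*} [Field K] [AddCommGroup V] [Module K V]
    [FiniteDimensional K V] {q : ℕ} {f : Fin q → Submodule K V} (hf : iSupIndep f) :
    finrank K ↥(⨆ i, f i) = ∑ i, finrank K ↥(f i) := by
  have h := finrank_finset_sup_eq_sum hf Finset.univ
  have h2 : (⨆ i ∈ Finset.univ, f i) = ⨆ i, f i := by simp
  rwa [Finset.sup_eq_iSup, h2] at h

set_option maxHeartbeats 2000000 in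
/-- **Frenet Projection Lemma** (Lemma 4.9), general position (hyperconvexity) part:
if `ξ` is a map from `α` to full flags of `ℝⁿ` (`n = k + l`) in general position, and
`τ_{yx}` is the projected curve into `ξ^k(y)`, then `τ_{yx}` is in general position:
for pairwise distinct `w₁, …, w_p` and positive `n₁ + ⋯ + n_p = k` with each `nᵢ ≤ k-1`,
the family `(τ_{yx}^{nᵢ}(wᵢ))ᵢ` is independent and its sum is `ξ^k(y)`. -/
theorem frenet_projection_general_position
    {α : Type*} [DecidableEq α] (k l : ℕ) (hk : 2 ≤ k) (hl : 1 ≤ l)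
    (ξ : α → ℕ → Submodule ℝ (Fin (k + l) → ℝ))
    (hrank : ∀ z i, 1 ≤ i → i ≤ k + l - 1 → Module.finrank ℝ ↥(ξ z i) = i)
    (hmono : ∀ z i, 1 ≤ i → i ≤ k + l - 2 → ξ z i ≤ ξ z (i + 1))
    (htop : ∀ z, ξ z (k + l) = ⊤)
    (hgp : ∀ (p : ℕ) (w : Fin p → α), Function.Injective w →
      ∀ m : Fin p → ℕ, (∀ i, 1 ≤ m i) → (∀ i, m i ≤ k + l - 1) →
      (∑ i, m i) ≤ k + l → iSupIndep (fun i => ξ (w i) (m i)))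
    (x y : α) (hxy : x ≠ y)
    (τ : ℕ → α → Submodule ℝ (Fin (k + l) → ℝ))
    (hτ : ∀ j z, τ j z =
      if z = x then ξ x (l + j) ⊓ ξ y k
      else if z = y then ξ y j
      else (ξ x l ⊔ ξ z j) ⊓ ξ y k) :
    ∀ (p : ℕ), 2 ≤ p → ∀ w : Fin p → α, Function.Injective w →
      ∀ m : Fin p → ℕ, (∀ i, 1 ≤ m i) → (∀ i, m i ≤ k - 1) →
      (∑ i, m i) = k →
      iSupIndep (fun i => τ (m i) (w i)) ∧ (⨆ i, τ (m i) (w i)) = ξ y k := by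
  classical
  have hdim : finrank ℝ (Fin (k + l) → ℝ) = k + l := by simp
  -- monotonicity along the flag
  have hchain : ∀ (z : α) (i i' : ℕ), 1 ≤ i → i ≤ i' → i' ≤ k + l - 1 → ξ z i ≤ ξ z i' := by
    intro z i i' h1 hle
    induction hle with
    | refl => exact fun _ => le_rfl
    | @step m hm ih =>
      intro hub
      have hm2 : i ≤ m := hm
      exact (ih (by omega)).trans (hmono z m (by omega) (by omega))
  have hrxl : finrank ℝ ↥(ξ x l) = l := hrank x l hl (by omega)
  have hryk : finrank ℝ ↥(ξ y k) = k := hrank y k (by omega) (by omega)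
  -- rank of the span of a pair
  have hpair : ∀ (a b : α), a ≠ b → ∀ (i j : ℕ), 1 ≤ i → 1 ≤ j → i ≤ k + l - 1 →
      j ≤ k + l - 1 → i + j ≤ k + l → finrank ℝ ↥(ξ a i ⊔ ξ b j) = i + j := by
    intro a b hab i j h1i h1j hui huj hsumij
    have hinj : Function.Injective ![a, b] := by
      intro s t hst
      match s, t with
      | 0, 0 => rfl
      | 1, 1 => rfl
      | 0, 1 =>
        simp only [Matrix.cons_val_zero, Matrix.cons_val_one, Matrix.head_cons] at hst
        exact absurd hst hab
      | 1, 0 =>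
        simp only [Matrix.cons_val_zero, Matrix.cons_val_one, Matrix.head_cons] at hst
        exact absurd hst.symm hab
    have hind := hgp 2 ![a, b] hinj ![i, j]
      (by intro s; match s with | 0 => exact h1i | 1 => exact h1j)
      (by intro s; match s with | 0 => exact hui | 1 => exact huj)
      (by rw [Fin.sum_univ_two]; exact hsumij)
    have h := finrank_iSup_eq_sum hind
    have hsup2 : (⨆ s : Fin 2, ξ (![a, b] s) (![i, j] s)) = ξ a i ⊔ ξ b j := by
      refine le_antisymm (iSup_le fun s => ?_)
        (sup_le (le_iSup (fun s => ξ (![a, b] s) (![i, j] s)) 0)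
          (le_iSup (fun s => ξ (![a, b] s) (![i, j] s)) 1))
      match s with
      | 0 => exact le_sup_left
      | 1 => exact le_sup_right
    rw [hsup2, Fin.sum_univ_two] at h
    simp only [Matrix.cons_val_zero, Matrix.cons_val_one, Matrix.head_cons] at h
    rw [h]; exact congrArg₂ (· + ·) (hrank a i h1i hui) (hrank b j h1j huj)
  have htop2 : ξ x l ⊔ ξ y k = ⊤ := by
    apply Submodule.eq_top_of_finrank_eq
    rw [hpair x y hxy l k hl (by omega) (by omega) (by omega) (by omega), hdim]
    omega
  -- each τ is contained in ξ y k
  have htau_le : ∀ (j : ℕ) (z : α), 1 ≤ j → j ≤ k - 1 → τ j z ≤ ξ y k := by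
    intro j z h1 h2
    by_cases hzx : z = x
    · rw [hτ, if_pos hzx]; exact inf_le_right
    · by_cases hzy : z = y
      · rw [hτ, if_neg hzx, if_pos hzy]
        exact hchain y j k h1 (by omega) (by omega)
      · rw [hτ, if_neg hzx, if_neg hzy]; exact inf_le_right
  -- rank of each τ
  have htau_rank : ∀ (j : ℕ) (z : α), 1 ≤ j → j ≤ k - 1 → finrank ℝ ↥(τ j z) = j := by
    intro j z h1 h2
    by_cases hzx : z = x
    · rw [hτ, if_pos hzx]
      have hsup : ξ x (l + j) ⊔ ξ y k = ⊤ := by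
        refine le_antisymm le_top ?_
        rw [← htop2]
        exact sup_le_sup_right (hchain x l (l + j) hl (by omega) (by omega)) _
      have h := Submodule.finrank_sup_add_finrank_inf_eq (ξ x (l + j)) (ξ y k)
      rw [hsup, finrank_top, hdim, hrank x (l + j) (by omega) (by omega), hryk] at h
      omega
    · by_cases hzy : z = y
      · rw [hτ, if_neg hzx, if_pos hzy]
        exact hrank y j h1 (by omega)
      · rw [hτ, if_neg hzx, if_neg hzy]
        have hA : finrank ℝ ↥(ξ x l ⊔ ξ z j) = l + j :=
          hpair x z (fun h => hzx h.symm) l j hl h1 (by omega) (by omega) (by omega)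
        have hsup : (ξ x l ⊔ ξ z j) ⊔ ξ y k = ⊤ := by
          refine le_antisymm le_top ?_
          rw [← htop2]
          exact sup_le_sup_right le_sup_left _
        have h := Submodule.finrank_sup_add_finrank_inf_eq (ξ x l ⊔ ξ z j) (ξ y k)
        rw [hsup, finrank_top, hdim, hA, hryk] at h
        omega
  intro p hp w hw m hm1 hmk hsum
  -- key modular-law step for points different from x
  have hstep : ∀ i : Fin p, w i ≠ x → ξ (w i) (m i) ≤ ξ x l ⊔ τ (m i) (w i) := by
    intro i hix
    by_cases hiy : w i = y
    · rw [hτ, if_neg hix, if_pos hiy, hiy]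
      exact le_sup_right
    · rw [hτ, if_neg hix, if_neg hiy]
      rw [sup_comm,
        inf_sup_assoc_of_le _ (le_sup_left : ξ x l ≤ ξ x l ⊔ ξ (w i) (m i)),
        sup_comm (ξ y k) (ξ x l), htop2, inf_top_eq]
      exact le_sup_right
  -- the sup together with ξ x l is everything
  have htopS : ξ x l ⊔ (⨆ i, τ (m i) (w i)) = ⊤ := by
    refine le_antisymm le_top ?_
    by_cases hex : ∃ i0, w i0 = x
    · obtain ⟨i0, hi0⟩ := hex
      set m' : Fin p → ℕ := fun i => m i + if i = i0 then l else 0 with hm'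
      have hsum' : ∑ i, m' i = k + l := by
        rw [hm', Finset.sum_add_distrib, hsum,
          Finset.sum_ite_eq' Finset.univ i0 (fun _ => l)]
        simp
      have hb1 : ∀ i, 1 ≤ m' i := by
        intro i
        have h1 := hm1 i
        have h2 := hm1 i0
        by_cases h : i = i0 <;> simp [hm', h] <;> omega
      have hb2 : ∀ i, m' i ≤ k + l - 1 := by
        intro i
        have h1 := hmk i
        have h2 := hmk i0
        by_cases h : i = i0 <;> simp [hm', h] <;> omega
      have hind := hgp p w hw m' hb1 hb2 (le_of_eq hsum')
      have htop' : (⨆ i, ξ (w i) (m' i)) = ⊤ := by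
        apply Submodule.eq_top_of_finrank_eq
        rw [finrank_iSup_eq_sum hind, hdim,
          Finset.sum_congr rfl fun i _ => hrank (w i) (m' i) (hb1 i) (hb2 i), hsum']
      rw [← htop']
      refine iSup_le fun i => ?_
      by_cases hii : i = i0
      · subst hii
        have hm'0 : m' i = m i + l := by simp [hm']
        rw [hm'0, hi0]
        refine le_trans ?_ (sup_le_sup_left (le_iSup (fun j => τ (m j) (w j)) i) _)
        rw [hi0, hτ, if_pos rfl, add_comm (m i) l]
        have hmi := hmk i
        rw [sup_comm,
          inf_sup_assoc_of_le _ (hchain x l (l + m i) hl (by omega) (by omega)),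
          sup_comm (ξ y k) (ξ x l), htop2, inf_top_eq]
      · have hix : w i ≠ x := fun hc => hii (hw (hc.trans hi0.symm))
        have hm'i : m' i = m i := by simp [hm', hii]
        rw [hm'i]
        exact le_trans (hstep i hix) (sup_le_sup_left (le_iSup (fun j => τ (m j) (w j)) i) _)
    · push_neg at hex
      set w' : Fin (p + 1) → α := Fin.cons x w with hw'
      set m' : Fin (p + 1) → ℕ := Fin.cons l m with hm'
      have hinj : Function.Injective w' := by
        intro a b hab
        rcases Fin.eq_zero_or_eq_succ a with rfl | ⟨a', rfl⟩ <;>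
          rcases Fin.eq_zero_or_eq_succ b with rfl | ⟨b', rfl⟩
        · rfl
        · simp only [hw', Fin.cons_zero, Fin.cons_succ] at hab
          exact absurd hab.symm (hex b')
        · simp only [hw', Fin.cons_zero, Fin.cons_succ] at hab
          exact absurd hab (hex a')
        · simp only [hw', Fin.cons_succ] at hab
          rw [hw hab]
      have hsum' : ∑ i, m' i = k + l := by
        rw [hm', Fin.sum_cons, hsum]
        omega
      have hb1 : ∀ i, 1 ≤ m' i := by
        intro i
        rcases Fin.eq_zero_or_eq_succ i with rfl | ⟨j, rfl⟩
        · simpa [hm'] using hl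
        · simpa [hm'] using hm1 j
      have hb2 : ∀ i, m' i ≤ k + l - 1 := by
        intro i
        rcases Fin.eq_zero_or_eq_succ i with rfl | ⟨j, rfl⟩
        · simp only [hm', Fin.cons_zero]; omega
        · simp only [hm', Fin.cons_succ]; have := hmk j; omega
      have hind := hgp (p + 1) w' hinj m' hb1 hb2 (le_of_eq hsum')
      have htop' : (⨆ i, ξ (w' i) (m' i)) = ⊤ := by
        apply Submodule.eq_top_of_finrank_eq
        rw [finrank_iSup_eq_sum hind, hdim,
          Finset.sum_congr rfl fun i _ => hrank (w' i) (m' i) (hb1 i) (hb2 i), hsum']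
      rw [← htop']
      refine iSup_le fun i => ?_
      rcases Fin.eq_zero_or_eq_succ i with rfl | ⟨j, rfl⟩
      · simp only [hw', hm', Fin.cons_zero]
        exact le_sup_left
      · simp only [hw', hm', Fin.cons_succ]
        exact le_trans (hstep j (hex j)) (sup_le_sup_left (le_iSup (fun j => τ (m j) (w j)) j) _)
  -- the sup equals ξ y k
  have hSle : (⨆ i, τ (m i) (w i)) ≤ ξ y k :=
    iSup_le fun i => htau_le (m i) (w i) (hm1 i) (hmk i)
  have hSge : k ≤ finrank ℝ ↥(⨆ i, τ (m i) (w i)) := by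
    have h := Submodule.finrank_sup_add_finrank_inf_eq (ξ x l) (⨆ i, τ (m i) (w i))
    rw [htopS, finrank_top, hdim, hrxl] at h
    omega
  have hSeq : (⨆ i, τ (m i) (w i)) = ξ y k :=
    Submodule.eq_of_le_of_finrank_le hSle (by rw [hryk]; exact hSge)
  refine ⟨?_, hSeq⟩
  rw [iSupIndep_def]
  intro i
  set R := ⨆ (j) (_ : j ≠ i), τ (m j) (w j) with hR
  clear_value R
  have hReq : R = (Finset.univ.erase i).sup (fun j => τ (m j) (w j)) := by
    rw [hR, Finset.sup_eq_iSup]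
    simp only [Finset.mem_erase, Finset.mem_univ, and_true]
  have hRle : finrank ℝ ↥R ≤ k - m i := by
    have hle1 : finrank ℝ ↥R ≤ ∑ j ∈ Finset.univ.erase i, m j := by
      rw [hReq]
      refine le_trans (finrank_finset_sup_le_sum _ _) (le_of_eq ?_)
      exact Finset.sum_congr rfl fun j _ => htau_rank (m j) (w j) (hm1 j) (hmk j)
    have h2 : (∑ j ∈ Finset.univ.erase i, m j) + m i = k := by
      rw [← hsum]
      exact Finset.sum_erase_add Finset.univ m (Finset.mem_univ i)
    omega
  have hsupR : τ (m i) (w i) ⊔ R = ξ y k := by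
    rw [← hSeq, hR]
    refine le_antisymm
      (sup_le (le_iSup (fun j => τ (m j) (w j)) i) (iSup_le fun j => iSup_le fun _ => le_iSup (fun j => τ (m j) (w j)) j)) ?_
    refine iSup_le fun j => ?_
    by_cases hji : j = i
    · subst hji; exact le_sup_left
    · exact le_trans (le_iSup₂ (f := fun j _ => τ (m j) (w j)) j hji) le_sup_right
  have h := Submodule.finrank_sup_add_finrank_inf_eq (τ (m i) (w i)) R
  rw [hsupR, hryk, htau_rank (m i) (w i) (hm1 i) (hmk i)] at h
  have h0 : finrank ℝ ↥(τ (m i) (w i) ⊓ R) = 0 := by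
    have := hm1 i; have := hmk i
    omega
  rw [disjoint_iff]
  exact Submodule.finrank_eq_zero.mp h0
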